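/- Let h > ℓ, σ > 0, and 0 < θ̲ < θ̄ < 1, and define E(p) = ((p−θ̲)/(θ̄−θ̲))·T(θ̄) + ((θ̄−p)/(θ̄−θ̲))·T(θ̲) − T(p). Then E(θ̲) = E(θ̄) = 0; (1/2)·((h−ℓ)/σ)²·p²(1−p)²·E''(p) = −1 for every p ∈ (θ̲, θ̄); and E(p) > 0 for every p ∈ (θ̲, θ̄). -/

import Mathlib

open Real

/-- The expected time-to-decision
`E(p) = ((p-θ̲)/(θ̄-θ̲))T(θ̄) + ((θ̄-p)/(θ̄-θ̲))T(θ̲) - T(p)` vanishes at the two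
thresholds, satisfies `(1/2)((h-ℓ)/σ)² p²(1-p)² E''(p) = -1` on `(θ̲,θ̄)`, and is
strictly positive on `(θ̲,θ̄)`. -/
theorem stmt_17 (h ℓ σ : ℝ) (hhl : ℓ < h) (hσ : 0 < σ)
    (θl θu : ℝ) (hθl : 0 < θl) (hθlu : θl < θu) (hθu : θu < 1)
    (T E : ℝ → ℝ)
    (hT : ∀ p : ℝ, T p = (2 * σ ^ 2 / (h - ℓ) ^ 2) * (2 * p - 1) * Real.log (p / (1 - p)))
    (hE : ∀ p : ℝ, E p = ((p - θl) / (θu - θl)) * T θu + ((θu - p) / (θu - θl)) * T θl - T p) :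
    E θl = 0 ∧ E θu = 0 ∧
    (∀ p ∈ Set.Ioo θl θu,
      (1 / 2) * ((h - ℓ) / σ) ^ 2 * p ^ 2 * (1 - p) ^ 2 * deriv (deriv E) p = -1) ∧
    (∀ p ∈ Set.Ioo θl θu, 0 < E p) := by
  have hlu : θu - θl ≠ 0 := by linarith
  have hhl' : h - ℓ ≠ 0 := by linarith
  set c : ℝ := 2 * σ ^ 2 / (h - ℓ) ^ 2 with hc
  have hcpos : 0 < c := by positivity
  -- derivative of log(x/(1-x))
  have hL : ∀ p ∈ Set.Ioo (0:ℝ) 1, HasDerivAt (fun x => Real.log (x / (1 - x)))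
      (1 / (p * (1 - p))) p := by
    intro p hp
    have hp0 : (0:ℝ) < p := hp.1
    have hp1 : p < 1 := hp.2
    have h1p : (0:ℝ) < 1 - p := by linarith [hp.2]
    have hdiv : HasDerivAt (fun x : ℝ => x / (1 - x))
        ((1 * (1 - p) - p * (0 - 1)) / (1 - p) ^ 2) p := by
      exact (hasDerivAt_id p).div ((hasDerivAt_const p 1).sub (hasDerivAt_id p)) h1p.ne'
    have hne : p / (1 - p) ≠ 0 := (div_pos hp0 h1p).ne'
    have := hdiv.log hne
    convert this using 1
    field_simp
    ring
  -- derivative of T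
  have hT' : ∀ p ∈ Set.Ioo (0:ℝ) 1, HasDerivAt T
      (c * (2 * Real.log (p / (1 - p)) + (2 * p - 1) / (p * (1 - p)))) p := by
    intro p hp
    have hp0 : (0:ℝ) < p := hp.1
    have h1p : (0:ℝ) < 1 - p := by linarith [hp.2]
    have hTfun : T = fun x => c * (2 * x - 1) * Real.log (x / (1 - x)) := funext hT
    rw [hTfun]
    have hlin : HasDerivAt (fun x : ℝ => c * (2 * x - 1)) (c * 2) p := by
      simpa using (((hasDerivAt_id p).const_mul (2:ℝ)).sub (hasDerivAt_const p 1)).const_mul c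
    have := hlin.mul (hL p hp)
    refine this.congr_deriv ?_
    field_simp
  -- the first-derivative function
  set D : ℝ → ℝ := fun x => c * (2 * Real.log (x / (1 - x)) + (2 * x - 1) / (x * (1 - x)))
    with hD
  have hD' : ∀ p ∈ Set.Ioo (0:ℝ) 1, HasDerivAt D (c / (p ^ 2 * (1 - p) ^ 2)) p := by
    intro p hp
    have hp0 : (0:ℝ) < p := hp.1
    have h1p : (0:ℝ) < 1 - p := by linarith [hp.2]
    have hden : HasDerivAt (fun x : ℝ => x * (1 - x)) (1 * (1 - p) + p * (0 - 1)) p :=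
      (hasDerivAt_id p).mul ((hasDerivAt_const p 1).sub (hasDerivAt_id p))
    have hnum : HasDerivAt (fun x : ℝ => 2 * x - 1) 2 p := by
      have := ((hasDerivAt_id p).const_mul (2:ℝ)).sub (hasDerivAt_const p 1)
      refine this.congr_deriv ?_
      ring
    have hq : HasDerivAt (fun x : ℝ => (2 * x - 1) / (x * (1 - x)))
        ((2 * (p * (1 - p)) - (2 * p - 1) * (1 * (1 - p) + p * (0 - 1))) / (p * (1 - p)) ^ 2) p :=
      hnum.div hden (mul_pos hp0 h1p).ne'
    have hlog := (hL p hp).const_mul (2:ℝ)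
    have := (hlog.add hq).const_mul c
    refine this.congr_deriv ?_
    field_simp
    ring
  -- derivative of E
  have hK : ∀ p ∈ Set.Ioo (0:ℝ) 1, HasDerivAt E
      (T θu / (θu - θl) - T θl / (θu - θl) - D p) p := by
    intro p hp
    have hEfun : E = fun x => ((x - θl) / (θu - θl)) * T θu + ((θu - x) / (θu - θl)) * T θl - T x :=
      funext hE
    rw [hEfun]
    have h1 : HasDerivAt (fun x : ℝ => ((x - θl) / (θu - θl)) * T θu) (T θu / (θu - θl)) p := by
      refine
        ((((hasDerivAt_id p).sub (hasDerivAt_const p θl)).div_const (θu - θl)).mul_const (T θu)).congr_deriv ?_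
      ring
    have h2 : HasDerivAt (fun x : ℝ => ((θu - x) / (θu - θl)) * T θl) (-(T θl / (θu - θl))) p := by
      have := ((((hasDerivAt_const p θu).sub (hasDerivAt_id p)).div_const (θu - θl)).mul_const
        (T θl))
      refine this.congr_deriv ?_
      field_simp
      try ring
    have h3 : HasDerivAt T (D p) p := by
      simpa [hD] using hT' p hp
    have := (h1.add h2).sub h3
    refine this.congr_deriv ?_
    try ring
  have hsub : Set.Ioo θl θu ⊆ Set.Ioo (0:ℝ) 1 := fun x hx =>
    ⟨lt_trans hθl hx.1, lt_trans hx.2 hθu⟩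
  -- deriv E agrees with K' - D on Ioo 0 1
  have hderivE : ∀ p ∈ Set.Ioo (0:ℝ) 1,
      deriv E p = T θu / (θu - θl) - T θl / (θu - θl) - D p := fun p hp => (hK p hp).deriv
  have hderivT : ∀ p ∈ Set.Ioo (0:ℝ) 1, deriv T p = D p := fun p hp => by
    simpa [hD] using (hT' p hp).deriv
  -- second derivative of E on Ioo 0 1
  have hderiv2E : ∀ p ∈ Set.Ioo (0:ℝ) 1,
      deriv (deriv E) p = -(c / (p ^ 2 * (1 - p) ^ 2)) := by
    intro p hp
    have heq : deriv E =ᶠ[nhds p] fun x => T θu / (θu - θl) - T θl / (θu - θl) - D x := by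
      filter_upwards [isOpen_Ioo.mem_nhds hp] with x hx using hderivE x hx
    rw [heq.deriv_eq]
    have : HasDerivAt (fun x => T θu / (θu - θl) - T θl / (θu - θl) - D x)
        (-(c / (p ^ 2 * (1 - p) ^ 2))) p := by
      have := (hasDerivAt_const p (T θu / (θu - θl) - T θl / (θu - θl))).sub (hD' p hp)
      refine this.congr_deriv ?_
      ring
    exact this.deriv
  -- second derivative of T on Ioo 0 1
  have hderiv2T : ∀ p ∈ Set.Ioo (0:ℝ) 1,
      deriv (deriv T) p = c / (p ^ 2 * (1 - p) ^ 2) := by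
    intro p hp
    have heq : deriv T =ᶠ[nhds p] D := by
      filter_upwards [isOpen_Ioo.mem_nhds hp] with x hx using hderivT x hx
    rw [heq.deriv_eq]
    exact (hD' p hp).deriv
  -- strict convexity of T on [θl, θu]
  have hIcc : Set.Icc θl θu ⊆ Set.Ioo (0:ℝ) 1 := fun x hx =>
    ⟨lt_of_lt_of_le hθl hx.1, lt_of_le_of_lt hx.2 hθu⟩
  have hTcont : ContinuousOn T (Set.Icc θl θu) := by
    intro x hx
    exact ((hT' x (hIcc hx)).continuousAt).continuousWithinAt
  have hconv : StrictConvexOn ℝ (Set.Icc θl θu) T := by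
    apply strictConvexOn_of_deriv2_pos (convex_Icc θl θu) hTcont
    intro x hx
    rw [interior_Icc] at hx
    have hx' := hsub hx
    have : deriv^[2] T x = deriv (deriv T) x := by
      simp [Function.iterate_succ, Function.iterate_zero, Function.comp]
    rw [this, hderiv2T x hx']
    have h0 : (0:ℝ) < x := hx'.1
    have h1 : x < 1 := hx'.2
    have : (0:ℝ) < 1 - x := by linarith
    positivity
  refine ⟨?_, ?_, ?_, ?_⟩
  · rw [hE θl]; field_simp; ring
  · rw [hE θu]; field_simp; ring
  · intro p hp
    have hp' := hsub hp
    rw [hderiv2E p hp']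
    have h0 : (0:ℝ) < p := hp'.1
    have h1 : (0:ℝ) < 1 - p := by linarith [hp'.2]
    rw [hc]
    field_simp
  · intro p hp
    have ha : (0:ℝ) < (θu - p) / (θu - θl) := by
      apply div_pos <;> linarith [hp.2, hθlu]
    have hb : (0:ℝ) < (p - θl) / (θu - θl) := by
      apply div_pos <;> linarith [hp.1, hθlu]
    have hab : (θu - p) / (θu - θl) + (p - θl) / (θu - θl) = 1 := by
      field_simp
      ring
    have hkey := hconv.2 (Set.left_mem_Icc.2 hθlu.le) (Set.right_mem_Icc.2 hθlu.le)
      hθlu.ne ha hb hab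
    simp only [smul_eq_mul] at hkey
    have hcomb : (θu - p) / (θu - θl) * θl + (p - θl) / (θu - θl) * θu = p := by
      rw [div_mul_eq_mul_div, div_mul_eq_mul_div, ← add_div, div_eq_iff hlu]
      ring
    rw [hcomb] at hkey
    rw [hE p]
    linarith
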